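/- Let m be an even positive integer. Then there exists a rational number a with |a| ≤ 1 such that: (i) there is a real number b, constructible over ℚ (i.e., over the prime subfield of ℝ), with T_m(b) = a; and (ii) no rational number r satisfies T_m(r) = a. -/

import Mathlib

open Polynomial

/-- Degree bound and leading coefficient of Chebyshev T over ℤ. -/
lemma cheb_deg_coeff : ∀ k : ℕ, (Chebyshev.T ℤ k).natDegree ≤ k ∧
    (Chebyshev.T ℤ k).coeff k = 2 ^ (k - 1) := by
  have H : ∀ k : ℕ, ((Chebyshev.T ℤ k).natDegree ≤ k ∧ (Chebyshev.T ℤ k).coeff k = 2 ^ (k - 1))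
      ∧ ((Chebyshev.T ℤ (k+1)).natDegree ≤ k+1 ∧ (Chebyshev.T ℤ (k+1)).coeff (k+1) = 2 ^ k) := by
    intro k
    induction k with
    | zero =>
      refine ⟨⟨?_, ?_⟩, ?_, ?_⟩ <;> simp [Polynomial.Chebyshev.T_zero, Polynomial.Chebyshev.T_one]
    | succ k ih =>
      obtain ⟨⟨h1, h2⟩, h3, h4⟩ := ih
      have hT : Chebyshev.T ℤ ((k+2 : ℕ) : ℤ)
          = 2 * X * Chebyshev.T ℤ ((k:ℤ)+1) - Chebyshev.T ℤ (k:ℤ) := by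
        push_cast
        rw [show ((k:ℤ) + 2) = (k:ℤ) + 2 by ring, Polynomial.Chebyshev.T_add_two]
      have hC : (2 : ℤ[X]) = C 2 := (map_ofNat C 2).symm
      have hcast : ((k:ℤ)+1) = ((k+1:ℕ):ℤ) := by push_cast; ring
      constructor
      · exact ⟨by exact_mod_cast h3, by exact_mod_cast h4⟩
      constructor
      · have : (Chebyshev.T ℤ ((k+2:ℕ):ℤ)).natDegree ≤ k + 2 := by
          rw [hT]
          refine (natDegree_sub_le _ _).trans ?_
          have hb : (2 * X * Chebyshev.T ℤ ((k:ℤ)+1)).natDegree ≤ k + 2 := by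
            refine (natDegree_mul_le).trans ?_
            have hx : (2 * X : ℤ[X]).natDegree ≤ 1 := by
              refine (natDegree_mul_le).trans ?_
              simp
            have h3' : (Chebyshev.T ℤ ((k:ℤ)+1)).natDegree ≤ k + 1 := by
              rw [hcast]; exact h3
            omega
          have hb2 : (Chebyshev.T ℤ (k:ℤ)).natDegree ≤ k + 2 := h1.trans (by omega)
          omega
        exact_mod_cast this
      · have : (Chebyshev.T ℤ ((k+2:ℕ):ℤ)).coeff (k+2) = 2 ^ (k+1) := by
          rw [hT, coeff_sub]
          have hz : (Chebyshev.T ℤ (k:ℤ)).coeff (k+2) = 0 :=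
            coeff_eq_zero_of_natDegree_lt (lt_of_le_of_lt h1 (by omega))
          have h4' : (Chebyshev.T ℤ ((k:ℤ)+1)).coeff (k+1) = 2 ^ k := by
            rw [hcast]; exact h4
          rw [hz, sub_zero, mul_assoc, hC, coeff_C_mul, coeff_X_mul, h4']
          ring
        exact_mod_cast this
  exact fun k => (H k).1

/-- Clearing denominators in a polynomial evaluation. -/
lemma key_eval (P : Polynomial ℤ) (k : ℕ) (hd : P.natDegree < k + 1) (p q : ℤ)
    (hq : (q : ℚ) ≠ 0) :
    (q : ℚ) ^ k * (P.map (Int.castRingHom ℚ)).eval ((p : ℚ) / (q : ℚ)) =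
      ((∑ i ∈ Finset.range (k+1), P.coeff i * p ^ i * q ^ (k - i) : ℤ) : ℚ) := by
  rw [Polynomial.eval_eq_sum_range' (lt_of_le_of_lt Polynomial.natDegree_map_le hd)]
  rw [Finset.mul_sum]
  push_cast
  refine Finset.sum_congr rfl ?_
  intro i hi
  have hik : i ≤ k := Nat.lt_succ_iff.mp (Finset.mem_range.mp hi)
  rw [Polynomial.coeff_map]
  have hqq : (q : ℚ) ^ k = q ^ (k - i) * q ^ i := by
    rw [← pow_add]; congr 1; omega
  rw [hqq, div_pow]
  have hqi : (q : ℚ) ^ i ≠ 0 := pow_ne_zero _ hq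
  field_simp
  rw [eq_intCast]
  ring

lemma three_pow_unique : ∀ (n : ℕ) {k : ℕ} {x y : ℤ}, ¬ (3:ℤ) ∣ x → ¬ (3:ℤ) ∣ y →
    3 ^ n * x = 3 ^ k * y → n = k := by
  intro n
  induction n with
  | zero =>
    intro k x y hx hy h
    cases k with
    | zero => rfl
    | succ k =>
      exfalso
      apply hx
      rw [pow_zero, one_mul] at h
      exact ⟨3 ^ k * y, by rw [h, pow_succ]; ring⟩
  | succ n ih =>
    intro k x y hx hy h
    cases k with
    | zero =>
      exfalso
      apply hy
      rw [pow_zero, one_mul] at h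
      exact ⟨3 ^ n * x, by rw [← h, pow_succ]; ring⟩
    | succ k =>
      have h' : (3:ℤ) * (3 ^ n * x) = 3 * (3 ^ k * y) := by
        rw [show (3:ℤ) * (3 ^ n * x) = 3 ^ (n+1) * x by rw [pow_succ]; ring,
            show (3:ℤ) * (3 ^ k * y) = 3 ^ (k+1) * y by rw [pow_succ]; ring, h]
      have := ih hx hy (mul_left_cancel₀ (by norm_num) h')
      omega

/-- A real number `b` is constructible over a subfield `F` of `ℝ` if there is a finite
chain of subfields `F = F₀ ⊆ F₁ ⊆ … ⊆ F_k` of `ℝ` with `b ∈ F_k`, each step obtained by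
adjoining a square root of an element of the previous field. -/
def IsConstructibleOver (F : Subfield ℝ) (b : ℝ) : Prop :=
  ∃ (k : ℕ) (Fs : ℕ → Subfield ℝ), Fs 0 = F ∧ b ∈ Fs k ∧
    ∀ i < k, ∃ x : ℝ, x ^ 2 ∈ Fs i ∧ Fs (i + 1) = Subfield.closure (↑(Fs i) ∪ {x})

/-- For every even positive integer `m` there is a rational `a` with
`|a| ≤ 1` such that `T_m(x) = a` has a real solution constructible over `ℚ`
(the prime subfield `⊥` of `ℝ`) but no rational solution. -/
theorem exists_constructible_not_rational_chebyshev_root (m : ℕ) (hm : 0 < m)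
    (hmeven : Even m) :
    ∃ a : ℚ, |a| ≤ 1 ∧
      (∃ b : ℝ, IsConstructibleOver ⊥ b ∧ (Chebyshev.T ℝ m).eval b = (a : ℝ)) ∧
      ∀ r : ℚ, (Chebyshev.T ℚ m).eval r ≠ a := by
  obtain ⟨n, hn⟩ := hmeven
  have hmn : m = 2 * n := by omega
  have hn1 : 1 ≤ n := by omega
  set a : ℚ := (Chebyshev.T ℚ n).eval (1/3) with ha
  have hcastℝ : ((a : ℚ) : ℝ) = (Chebyshev.T ℝ n).eval (1/3 : ℝ) := by
    have h1 : Chebyshev.T ℝ n = (Chebyshev.T ℚ n).map (Rat.castHom ℝ) :=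
      (Polynomial.Chebyshev.map_T (Rat.castHom ℝ) n).symm
    rw [h1, Polynomial.eval_map]
    rw [show ((1:ℝ)/3) = (Rat.castHom ℝ) (1/3 : ℚ) by norm_num]
    rw [Polynomial.eval₂_at_apply]
    norm_num [ha]
  refine ⟨a, ?_, ?_, ?_⟩
  · -- |a| ≤ 1
    have h13 : ((1:ℝ)/3) = Real.cos (Real.arccos (1/3)) := by
      rw [Real.cos_arccos (by norm_num) (by norm_num)]
    have : |((a:ℚ):ℝ)| ≤ 1 := by
      rw [hcastℝ, h13, Polynomial.Chebyshev.T_real_cos]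
      exact Real.abs_cos_le_one _
    exact_mod_cast this
  · -- constructible solution
    refine ⟨Real.sqrt (2/3), ?_, ?_⟩
    · refine ⟨1, fun i => if i = 0 then ⊥ else
        Subfield.closure (↑(⊥ : Subfield ℝ) ∪ {Real.sqrt (2/3)}), by simp, ?_, ?_⟩
      · simp only [if_neg one_ne_zero]
        exact Subfield.subset_closure (Or.inr rfl)
      · intro i hi
        interval_cases i
        refine ⟨Real.sqrt (2/3), ?_, by simp⟩
        simp only [if_pos rfl]
        rw [Real.sq_sqrt (by norm_num)]
        rw [show ((2:ℝ)/3) = ((2/3 : ℚ) : ℝ) by norm_num]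
        exact SubfieldClass.ratCast_mem _ _
    · -- eval of T_m at sqrt(2/3)
      have hm2 : (m : ℤ) = (n : ℤ) * 2 := by omega
      rw [hm2, Polynomial.Chebyshev.T_mul, Polynomial.eval_comp,
        Polynomial.Chebyshev.T_two]
      have hb2 : Real.sqrt (2/3) ^ 2 = 2/3 := Real.sq_sqrt (by norm_num)
      have heval2 : Polynomial.eval (Real.sqrt (2/3)) (2 * X ^ 2 - 1 : ℝ[X]) = 1/3 := by
        simp only [eval_sub, eval_mul, eval_pow, eval_ofNat, eval_X, eval_one, hb2]
        norm_num
      rw [heval2, hcastℝ]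
  · -- no rational solution
    intro r hr
    set p : ℤ := r.num with hp
    set q : ℤ := (r.den : ℤ) with hq
    have hq0 : (q : ℚ) ≠ 0 := by
      rw [hq]
      push_cast
      exact Nat.cast_ne_zero.mpr r.den_pos.ne'
    set Bm : ℤ := ∑ i ∈ Finset.range (m+1), (Chebyshev.T ℤ m).coeff i * p ^ i * q ^ (m - i)
      with hBm
    set A : ℤ := ∑ i ∈ Finset.range (n+1), (Chebyshev.T ℤ n).coeff i * 1 ^ i * 3 ^ (n - i)
      with hA
    have hTmQ : (Chebyshev.T ℤ (m:ℤ)).map (Int.castRingHom ℚ) = Chebyshev.T ℚ m :=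
      Polynomial.Chebyshev.map_T _ _
    have hTnQ : (Chebyshev.T ℤ (n:ℤ)).map (Int.castRingHom ℚ) = Chebyshev.T ℚ n :=
      Polynomial.Chebyshev.map_T _ _
    have h1 : (q : ℚ) ^ m * (Chebyshev.T ℚ m).eval r = (Bm : ℚ) := by
      have hk := key_eval (Chebyshev.T ℤ m) m (Nat.lt_succ_of_le (cheb_deg_coeff m).1)
        p q hq0
      rw [hTmQ] at hk
      rw [← hk]
      congr 2
      rw [hp, hq]
      push_cast
      exact (Rat.num_div_den r).symm
    have h2 : (3 : ℚ) ^ n * (Chebyshev.T ℚ n).eval (1/3) = (A : ℚ) := by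
      have hk := key_eval (Chebyshev.T ℤ n) n (Nat.lt_succ_of_le (cheb_deg_coeff n).1)
        1 3 (by norm_num)
      rw [hTnQ] at hk
      rw [← hk]
      norm_num
    have hmain : 3 ^ n * Bm = q ^ m * A := by
      have hcq : ((3 ^ n * Bm : ℤ) : ℚ) = ((q ^ m * A : ℤ) : ℚ) := by
        push_cast
        rw [← h1, ← h2, hr, ha]
        ring
      exact_mod_cast hcq
    have hcn : (Chebyshev.T ℤ n).coeff n = 2 ^ (n - 1) := (cheb_deg_coeff n).2
    have hA3 : ¬ (3:ℤ) ∣ A := by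
      intro hdvd
      rw [hA, Finset.sum_range_succ] at hdvd
      have hdvd1 : (3:ℤ) ∣ ∑ i ∈ Finset.range n,
          (Chebyshev.T ℤ n).coeff i * 1 ^ i * 3 ^ (n - i) := by
        refine Finset.dvd_sum ?_
        intro i hi
        have hin : i < n := Finset.mem_range.mp hi
        exact Dvd.dvd.mul_left (dvd_pow_self 3 (by omega)) _
      have hdvd2 : (3:ℤ) ∣ (Chebyshev.T ℤ n).coeff n * 1 ^ n * 3 ^ (n - n) :=
        (dvd_add_right hdvd1).mp hdvd
      rw [hcn] at hdvd2
      simp only [one_pow, Nat.sub_self, pow_zero, mul_one] at hdvd2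
      have h32 := Int.prime_three.dvd_of_dvd_pow hdvd2
      norm_num at h32
    by_cases h3q : (3:ℤ) ∣ q
    · have h3p : ¬ (3:ℤ) ∣ p := by
        intro hdvd
        have h1' : (3:ℕ) ∣ p.natAbs := by
          rw [← Int.natAbs_natCast 3]
          exact Int.natAbs_dvd_natAbs.mpr hdvd
        have h2' : (3:ℕ) ∣ r.den := by
          have h3' := Int.natAbs_dvd_natAbs.mpr h3q
          simpa [hq] using h3'
        have hg := Nat.dvd_gcd h1' h2'
        rw [Nat.Coprime.gcd_eq_one r.reduced] at hg
        omega
      have hcm : (Chebyshev.T ℤ m).coeff m = 2 ^ (m - 1) := (cheb_deg_coeff m).2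
      have hB3 : ¬ (3:ℤ) ∣ Bm := by
        intro hdvd
        rw [hBm, Finset.sum_range_succ] at hdvd
        have hdvd1 : (3:ℤ) ∣ ∑ i ∈ Finset.range m,
            (Chebyshev.T ℤ m).coeff i * p ^ i * q ^ (m - i) := by
          refine Finset.dvd_sum ?_
          intro i hi
          have him : i < m := Finset.mem_range.mp hi
          exact Dvd.dvd.mul_left (h3q.trans (dvd_pow_self q (by omega))) _
        have hdvd2 : (3:ℤ) ∣ (Chebyshev.T ℤ m).coeff m * p ^ m * q ^ (m - m) :=
          (dvd_add_right hdvd1).mp hdvd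
        rw [hcm] at hdvd2
        simp only [Nat.sub_self, pow_zero, mul_one] at hdvd2
        rcases (Int.prime_three.dvd_mul.mp hdvd2) with h | h
        · have h32 := Int.prime_three.dvd_of_dvd_pow h
          norm_num at h32
        · exact h3p (Int.prime_three.dvd_of_dvd_pow h)
      set e : ℕ := (r.den).factorization 3 with he
      set u : ℕ := r.den / 3 ^ e with hu
      have hqfac : 3 ^ e * u = r.den := Nat.ordProj_mul_ordCompl_eq_self r.den 3
      have hu3 : ¬ (3:ℕ) ∣ u := Nat.not_dvd_ordCompl (by norm_num) r.den_pos.ne'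
      have he1 : 1 ≤ e := by
        have h3d : (3:ℕ) ∣ r.den := by
          have h3' := Int.natAbs_dvd_natAbs.mpr h3q
          simpa [hq] using h3'
        exact Nat.Prime.factorization_pos_of_dvd (by norm_num) r.den_pos.ne' h3d
      have hqZ : q = 3 ^ e * (u : ℤ) := by
        rw [hq, ← hqfac]; push_cast; ring
      have hmain2 : 3 ^ n * Bm = 3 ^ (e * m) * ((u:ℤ) ^ m * A) := by
        rw [hmain, hqZ, mul_pow, ← pow_mul]
        ring
      have hu3Z : ¬ (3:ℤ) ∣ ((u:ℤ) ^ m * A) := by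
        intro hdvd
        rcases Int.prime_three.dvd_mul.mp hdvd with h | h
        · have hdu := Int.prime_three.dvd_of_dvd_pow h
          apply hu3
          exact_mod_cast hdu
        · exact hA3 h
      have heq := three_pow_unique n hB3 hu3Z hmain2
      -- n = e * m = e * 2 * n with e ≥ 1, n ≥ 1 : contradiction
      have : n = e * m := heq
      rw [hmn] at this
      nlinarith [this, he1, hn1]
    · apply hA3
      have h3L : (3:ℤ) ∣ 3 ^ n * Bm := Dvd.dvd.mul_right (dvd_pow_self 3 (by omega)) _
      rw [hmain] at h3L
      rcases Int.prime_three.dvd_mul.mp h3L with h | h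
      · exact absurd (Int.prime_three.dvd_of_dvd_pow h) h3q
      · exact h
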